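/- Let $q$ be a prime power and $d, r$ positive integers with $r \le d \le q$. The maximum number of common zeros in $\mathbb{P}^1(\mathbb{F}_q)$ of any $r$ linearly independent homogeneous polynomials of degree $d$ in $\mathbb{F}_q[x_0, x_1]$ is exactly $d - r + 1$. -/

import Mathlib

open MvPolynomial

lemma deg2 (f : Fin 2 →₀ ℕ) : f.degree = f 0 + f 1 := by
  rw [Finsupp.degree_apply, Finset.sum_subset (Finset.subset_univ f.support)
    (fun i _ hi => Finsupp.notMem_support_iff.mp hi), Fin.sum_univ_two]

noncomputable def degEquiv (d : ℕ) : Fin (d+1) ≃ {f : Fin 2 →₀ ℕ // f.degree = d} where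
  toFun := fun k => ⟨Finsupp.single 0 (k : ℕ) + Finsupp.single 1 (d - k), by
      rw [deg2]; simp [Finsupp.single_apply]; omega⟩
  invFun := fun f => ⟨f.1 0, by have := f.2; rw [deg2] at this; omega⟩
  left_inv := fun k => by ext; simp [Finsupp.single_apply]
  right_inv := fun f => by
    have hf := f.2; rw [deg2] at hf
    apply Subtype.ext
    ext j
    fin_cases j <;> simp [Finsupp.single_apply] <;> omega

noncomputable def homBasis (K : Type) [Field K] (d : ℕ) :
    Module.Basis (Fin (d+1)) K (homogeneousSubmodule (Fin 2) K d) :=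
  ((MvPolynomial.basisRestrictSupport K {f : Fin 2 →₀ ℕ | f.degree = d}).reindex
    (degEquiv d).symm).map (LinearEquiv.ofEq _ _ (homogeneousSubmodule_eq_finsupp_supported (σ := Fin 2) (R := K) d).symm)

lemma finrank_homog (K : Type) [Field K] (d : ℕ) :
    Module.finrank K (homogeneousSubmodule (Fin 2) K d) = d + 1 :=
  (Module.finrank_eq_card_basis (homBasis K d)).trans (Fintype.card_fin _)

lemma proj_eq_of_det {K : Type} [Field K] (u v : Fin 2 → K) (hu : u ≠ 0) (hv : v ≠ 0)
    (h : u 1 * v 0 - u 0 * v 1 = 0) :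
    Projectivization.mk K u hu = Projectivization.mk K v hv := by
  rw [Projectivization.mk_eq_mk_iff']
  by_cases h0 : v 0 = 0
  · have hv1 : v 1 ≠ 0 := by
      intro h1
      apply hv
      funext i
      fin_cases i <;> simp [h0, h1]
    have h2 : u 0 * v 1 = 0 := by rw [h0, mul_zero] at h; linear_combination -h
    have hu0 : u 0 = 0 := (mul_eq_zero.mp h2).resolve_right hv1
    refine ⟨u 1 / v 1, funext fun i => ?_⟩
    fin_cases i <;> simp [smul_eq_mul, h0, hu0]
    exact div_mul_cancel₀ _ hv1
  · have h' : u 0 * v 1 = u 1 * v 0 := by linear_combination -h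
    refine ⟨u 0 / v 0, funext fun i => ?_⟩
    fin_cases i <;> simp [smul_eq_mul]
    · exact div_mul_cancel₀ _ h0
    · rw [div_mul_eq_mul_div, h', mul_div_assoc, div_self h0, mul_one]

set_option synthInstance.maxHeartbeats 1000000 in
set_option maxHeartbeats 2000000 in
lemma upper_bound {K : Type} [Field K] [Fintype K] {d r : ℕ} (hr : 1 ≤ r) (hrd : r ≤ d)
    (Fs : Fin r → MvPolynomial (Fin 2) K) (hFs : LinearIndependent K Fs)
    (hhom : ∀ i, (Fs i).IsHomogeneous d) :
    Set.ncard {x : Projectivization K (Fin 2 → K) | ∀ i, eval x.rep (Fs i) = 0} ≤ d - r + 1 := by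
  classical
  set Z := {x : Projectivization K (Fin 2 → K) | ∀ i, eval x.rep (Fs i) = 0} with hZ
  by_contra hcon
  push_neg at hcon
  set e := d - r + 2 with he
  have hcon' : e ≤ Z.ncard := by omega
  obtain ⟨t, htZ, hte⟩ := Set.exists_subset_card_eq hcon'
  haveI : Finite (Projectivization K (Fin 2 → K)) := Quotient.finite _
  have htf : t.Finite := Set.toFinite t
  have hs : htf.toFinset.card = e := by
    rw [← Set.ncard_eq_toFinset_card _ htf, hte]
  set P : Fin e → Projectivization K (Fin 2 → K) :=
    fun k => ((htf.toFinset.equivFinOfCardEq hs).symm k : Projectivization K (Fin 2 → K)) with hP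
  have hPinj : Function.Injective P :=
    Subtype.val_injective.comp (Equiv.injective _)
  have hPZ : ∀ k i, eval (P k).rep (Fs i) = 0 := by
    intro k
    exact htZ (htf.mem_toFinset.mp ((htf.toFinset.equivFinOfCardEq hs).symm k).2)
  clear hP
  clear_value P
  clear hs htf hte htZ hcon' hcon hZ
  -- linear forms
  set M : Fin e → MvPolynomial (Fin 2) K :=
    fun j => C ((P j).rep 1) * X 0 - C ((P j).rep 0) * X 1 with hM
  set L : Fin e → MvPolynomial (Fin 2) K :=
    fun k => if (P k).rep 0 = 0 then X 1 else X 0 with hL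
  have hMhom : ∀ j, (M j).IsHomogeneous 1 := fun j =>
    (homogeneousSubmodule (Fin 2) K 1).sub_mem (isHomogeneous_C_mul_X _ _) (isHomogeneous_C_mul_X _ _)
  have hLhom : ∀ k, (L k).IsHomogeneous 1 := by
    intro k
    by_cases h0 : (P k).rep 0 = 0 <;> simp only [hL, if_pos, if_neg, h0, ite_true, ite_false] <;>
      exact isHomogeneous_X _ _
  have hevalM : ∀ j v, eval v (M j) = (P j).rep 1 * v 0 - (P j).rep 0 * v 1 := by
    intro j v; simp [hM]
  have hLne : ∀ k, eval (P k).rep (L k) ≠ 0 := by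
    intro k
    by_cases h0 : (P k).rep 0 = 0
    · simp only [hL, h0, ite_true, eval_X]
      intro h1
      exact (P k).rep_nonzero (funext fun i => by fin_cases i <;> simp [h0, h1])
    · simp only [hL, h0, ite_false, eval_X]
      exact h0
  have hMne : ∀ j k, j ≠ k → eval (P k).rep (M j) ≠ 0 := by
    intro j k hjk h0
    rw [hevalM] at h0
    apply hjk
    apply hPinj
    rw [← Projectivization.mk_rep (P j), ← Projectivization.mk_rep (P k)]
    exact proj_eq_of_det _ _ (P j).rep_nonzero (P k).rep_nonzero h0
  clear hM hL
  clear_value M L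
  set G : Fin e → MvPolynomial (Fin 2) K :=
    fun k => (L k) ^ (r - 1) * ∏ j ∈ Finset.univ.erase k, M j with hG
  have hGhom : ∀ k, (G k).IsHomogeneous d := by
    intro k
    have hcard : (Finset.univ.erase k).card = e - 1 := by
      rw [Finset.card_erase_of_mem (Finset.mem_univ _), Finset.card_univ, Fintype.card_fin]
    have h1 : (G k).IsHomogeneous (1 * (r - 1) + ∑ _j ∈ Finset.univ.erase k, 1) :=
      ((hLhom k).pow _).mul (IsHomogeneous.prod _ _ _ fun j _ => hMhom j)
    have h2 : 1 * (r - 1) + ∑ _j ∈ Finset.univ.erase k, (1:ℕ) = d := by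
      rw [Finset.sum_const, smul_eq_mul, hcard]
      omega
    rwa [h2] at h1
  set c : Fin e → K := fun k => eval (P k).rep (G k) with hc
  have hcne : ∀ k, c k ≠ 0 := by
    intro k
    rw [hc]
    simp only [hG, map_mul, map_pow, map_prod]
    apply mul_ne_zero (pow_ne_zero _ (hLne k))
    rw [Finset.prod_ne_zero_iff]
    intro j hj
    exact hMne j k (Finset.ne_of_mem_erase hj)
  have hGzero : ∀ k m, m ≠ k → eval (P m).rep (G k) = 0 := by
    intro k m hmk
    simp only [hG, map_mul, map_pow, map_prod]
    apply mul_eq_zero_of_right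
    apply Finset.prod_eq_zero (Finset.mem_erase.mpr ⟨hmk, Finset.mem_univ _⟩)
    rw [hevalM]
    ring
  clear hG
  clear_value G c
  set W := homogeneousSubmodule (Fin 2) K d with hW
  haveI : Module.Finite K W := Module.Finite.of_basis (homBasis K d)
  set Φ : W →ₗ[K] (Fin e → K) :=
    { toFun := fun F k => eval (P k).rep F.1
      map_add' := fun F G => by funext k; simp
      map_smul' := fun a F => by funext k; simp [smul_eval] } with hΦ
  have hsurj : Function.Surjective Φ := by
    intro w
    refine ⟨⟨∑ k, (w k * (c k)⁻¹) • G k,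
      Submodule.sum_mem _ fun k _ => Submodule.smul_mem _ _
        ((mem_homogeneousSubmodule _ _).mpr (hGhom k))⟩, ?_⟩
    funext m
    show eval (P m).rep (∑ k, (w k * (c k)⁻¹) • G k) = w m
    rw [map_sum, Finset.sum_eq_single m]
    · rw [smul_eval]
      have hcm : eval (P m).rep (G m) = c m := by rw [hc]
      rw [hcm, mul_assoc, inv_mul_cancel₀ (hcne m), mul_one]
    · intro k _ hk
      rw [smul_eval, hGzero k m (Ne.symm hk), mul_zero]
    · simp
  have hker : Module.finrank K (LinearMap.ker Φ) = r - 1 := by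
    have h2 := LinearMap.finrank_range_add_finrank_ker Φ
    rw [LinearMap.range_eq_top.mpr hsurj, finrank_top] at h2
    have h3 : Module.finrank K (Fin e → K) = e := Module.finrank_fin_fun K
    rw [h3] at h2
    have h4 : Module.finrank K W = d + 1 := finrank_homog K d
    rw [h4] at h2
    omega
  clear_value Φ
  have hmemW : ∀ i, Fs i ∈ W := fun i => (mem_homogeneousSubmodule _ _).mpr (hhom i)
  haveI : Module.Finite K (LinearMap.ker Φ) := inferInstance
  set Kmod := (LinearMap.ker Φ).map W.subtype with hKmod
  haveI : Module.Finite K Kmod := inferInstance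
  have hKfr : Module.finrank K Kmod = r - 1 := by
    rw [hKmod, Submodule.finrank_map_subtype_eq, hker]
  have hspan : Submodule.span K (Set.range Fs) ≤ Kmod := by
    rw [Submodule.span_le]
    rintro _ ⟨i, rfl⟩
    refine Submodule.mem_map.mpr ⟨⟨Fs i, hmemW i⟩, ?_, rfl⟩
    rw [LinearMap.mem_ker, hΦ]
    funext k
    exact hPZ k i
  have h6 : Module.finrank K (Submodule.span K (Set.range Fs)) = r := by
    rw [finrank_span_eq_card hFs, Fintype.card_fin]
  have h7 := Submodule.finrank_mono hspan
  rw [h6, hKfr] at h7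
  omega

set_option maxHeartbeats 1000000 in
theorem max_common_zeros_P1 (q d r : ℕ) {K : Type} [Field K] [Fintype K]
    (hq : Fintype.card K = q) (hr : 1 ≤ r) (hrd : r ≤ d) (hdq : d ≤ q) :
    IsGreatest {N : ℕ | ∃ Fs : Fin r → MvPolynomial (Fin 2) K,
        LinearIndependent K Fs ∧ (∀ i, (Fs i).IsHomogeneous d) ∧
        N = Set.ncard {x : Projectivization K (Fin 2 → K) | ∀ i, eval x.rep (Fs i) = 0}}
      (d - r + 1) := by
  classical
  constructor
  · -- membership : construct the family
    obtain ⟨T, -, hT⟩ := Finset.exists_subset_card_eq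
      (show d - r + 1 ≤ (Finset.univ : Finset K).card by rw [Finset.card_univ, hq]; omega)
    set G : MvPolynomial (Fin 2) K := ∏ a ∈ T, (X 1 - C a * X 0) with hG
    set Fs : Fin r → MvPolynomial (Fin 2) K :=
      fun i => G * (X 0 ^ (r - 1 - (i : ℕ)) * X 1 ^ (i : ℕ)) with hFs
    have hGne : G ≠ 0 := by
      rw [hG, Finset.prod_ne_zero_iff]
      intro a _ h0
      have h1 := congrArg (eval ![0, 1]) h0
      simpa using h1
    have hGhom : G.IsHomogeneous (d - r + 1) := by
      have h1 : G.IsHomogeneous (∑ _a ∈ T, 1) :=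
        IsHomogeneous.prod _ _ _ fun a _ =>
          (homogeneousSubmodule (Fin 2) K 1).sub_mem (isHomogeneous_X _ _)
            (isHomogeneous_C_mul_X _ _)
      rwa [Finset.sum_const, smul_eq_mul, hT, mul_one] at h1
    have hXpow : ∀ i : Fin r, (X 0 ^ (r - 1 - (i:ℕ)) * X 1 ^ (i:ℕ) : MvPolynomial (Fin 2) K)
        = monomial (Finsupp.single 0 (r - 1 - (i:ℕ)) + Finsupp.single 1 (i:ℕ)) (1:K) := by
      intro i
      rw [X_pow_eq_monomial, X_pow_eq_monomial, monomial_mul, one_mul]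
    have hmono : LinearIndependent K
        (fun i : Fin r => (X 0 ^ (r - 1 - (i:ℕ)) * X 1 ^ (i:ℕ) : MvPolynomial (Fin 2) K)) := by
      have hinj : Function.Injective
          (fun i : Fin r => Finsupp.single 0 (r - 1 - (i:ℕ)) + Finsupp.single (1 : Fin 2) (i:ℕ)) := by
        intro a b hab
        have h1 := congrArg (fun f : Fin 2 →₀ ℕ => f 1) hab
        simp [Finsupp.single_apply] at h1
        exact Fin.ext h1
      have h2 := (MvPolynomial.basisMonomials (Fin 2) K).linearIndependent.comp _ hinj
      have h3 : ⇑(MvPolynomial.basisMonomials (Fin 2) K) ∘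
          (fun i : Fin r => Finsupp.single 0 (r - 1 - (i:ℕ)) + Finsupp.single 1 (i:ℕ)) =
          fun i : Fin r => (X 0 ^ (r - 1 - (i:ℕ)) * X 1 ^ (i:ℕ) : MvPolynomial (Fin 2) K) := by
        funext i
        rw [Function.comp_apply, hXpow i]
        exact congrFun (MvPolynomial.coe_basisMonomials (Fin 2) K) _
      rwa [h3] at h2
    have hli : LinearIndependent K Fs := by
      have h3 := hmono.map' (LinearMap.mulLeft K G)
        (LinearMap.ker_eq_bot.mpr (fun p1 p2 hp => mul_left_cancel₀ hGne hp))
      exact h3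
    have hhom : ∀ i, (Fs i).IsHomogeneous d := by
      intro i
      have h2 := hGhom.mul ((isHomogeneous_X_pow (R := K) (0 : Fin 2) (r - 1 - (i:ℕ))).mul
        (isHomogeneous_X_pow (1 : Fin 2) (i:ℕ)))
      have h4 : d - r + 1 + (r - 1 - (i:ℕ) + (i:ℕ)) = d := by have := i.2; omega
      rwa [h4] at h2
    have hne : ∀ a : K, ![1, a] ≠ 0 := by
      intro a h
      have h1 := congrFun h 0
      simp at h1
    set g : K → Projectivization K (Fin 2 → K) :=
      fun a => Projectivization.mk K ![1, a] (hne a) with hg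
    have hginj : Function.Injective g := by
      intro a b hab
      rw [hg, Projectivization.mk_eq_mk_iff'] at hab
      obtain ⟨c, hc⟩ := hab
      have h0 := congrFun hc 0
      have h1 := congrFun hc 1
      simp [smul_eq_mul] at h0 h1
      rw [h0, one_mul] at h1
      exact h1.symm
    have hZeq : {x : Projectivization K (Fin 2 → K) | ∀ i, eval x.rep (Fs i) = 0} = g '' T := by
      ext x
      constructor
      · intro hx
        have hev : ∀ i : Fin r,
            eval x.rep G * (x.rep 0 ^ (r - 1 - (i:ℕ)) * x.rep 1 ^ (i:ℕ)) = 0 := by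
          intro i
          have h5 := hx i
          rw [hFs] at h5
          simpa [map_mul, map_pow] using h5
        have hGz : eval x.rep G = 0 := by
          by_contra hGnz
          have hcases := fun i => (mul_eq_zero.mp (hev i)).resolve_left hGnz
          rcases Nat.lt_or_ge 1 r with hr2 | hr1
          · have hA := hcases ⟨0, by omega⟩
            have hB := hcases ⟨r - 1, by omega⟩
            simp only [Fin.val_mk, Nat.sub_zero, pow_zero, mul_one, one_mul, Nat.sub_self] at hA hB
            have hA' : x.rep 0 = 0 := by
              have := pow_eq_zero_iff (n := r - 1) (by omega) |>.mp hA
              exact this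
            have hB' : x.rep 1 = 0 := by
              have := pow_eq_zero_iff (n := r - 1) (by omega) |>.mp hB
              exact this
            exact x.rep_nonzero (funext fun j => by fin_cases j <;> simp [hA', hB'])
          · have hr1' : r = 1 := by omega
            subst hr1'
            have hA := hcases 0
            simp at hA
        rw [hG, map_prod] at hGz
        obtain ⟨a, haT, ha⟩ := Finset.prod_eq_zero_iff.mp hGz
        simp only [map_sub, map_mul, eval_X, eval_C] at ha
        have hx0 : x.rep 0 ≠ 0 := by
          intro h0
          apply x.rep_nonzero
          funext j
          fin_cases j <;> simp [h0]
          rw [h0, mul_zero, sub_zero] at ha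
          exact ha
        refine ⟨a, haT, ?_⟩
        have hmk : Projectivization.mk K x.rep x.rep_nonzero = Projectivization.mk K ![1, a] (hne a) := by
          rw [Projectivization.mk_eq_mk_iff']
          refine ⟨x.rep 0, ?_⟩
          funext j
          fin_cases j <;> simp [smul_eq_mul]
          linear_combination -ha
        rw [hg, ← Projectivization.mk_rep x]
        exact hmk.symm
      · rintro ⟨a, haT, rfl⟩
        intro i
        have hGz : eval (Projectivization.mk K ![1, a] (hne a)).rep G = 0 := by
          obtain ⟨cu, hcu⟩ := Projectivization.exists_smul_eq_mk_rep K ![1, a] (hne a)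
          have h0 := congrFun hcu 0
          have h1 := congrFun hcu 1
          simp only [Pi.smul_apply, Matrix.cons_val_zero, Matrix.cons_val_one, Matrix.head_cons,
            Units.smul_def, smul_eq_mul] at h0 h1
          rw [hG, map_prod]
          apply Finset.prod_eq_zero haT
          simp only [map_sub, map_mul, eval_X, eval_C]
          rw [← h0, ← h1]
          ring
        show eval (Projectivization.mk K ![1, a] (hne a)).rep (Fs i) = 0
        rw [hFs]
        simp only [map_mul]
        rw [hGz, zero_mul]
    refine ⟨Fs, hli, hhom, ?_⟩
    rw [hZeq, Set.ncard_image_of_injective _ hginj, Set.ncard_coe_finset, hT]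
  · rintro N ⟨Fs, h1, h2, rfl⟩
    exact upper_bound hr hrd Fs h1 h2
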